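/- Let β = {W_1,…,W_q} be a partition in NC(n). Then the number of α ∈ NC(n) with α ≪ β equals the product over j = 1,…,q of the Catalan numbers Cat_{|W_j|−1}. -/

import Mathlib

open scoped Classical

/-- The minimum of a finset of naturals (`0` if empty). -/
noncomputable def fmin (A : Finset ℕ) : ℕ := sInf (A : Set ℕ)

/-- The maximum of a finset of naturals (`0` if empty). -/
noncomputable def fmax (A : Finset ℕ) : ℕ := sSup (A : Set ℕ)

/-- `α` is a partition of the finite set `F ⊆ ℕ`. -/
def IsPartitionOfSet (F : Finset ℕ) (α : Finset (Finset ℕ)) : Prop :=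
  (∀ V ∈ α, V.Nonempty) ∧ (∀ V ∈ α, V ⊆ F) ∧ (∀ m ∈ F, ∃ V ∈ α, m ∈ V) ∧
    ∀ V ∈ α, ∀ W ∈ α, V ≠ W → V ∩ W = ∅

/-- `α` is a partition of `{1,…,n}`. -/
def IsPartitionOf (n : ℕ) (α : Finset (Finset ℕ)) : Prop :=
  IsPartitionOfSet (Finset.Icc 1 n) α

/-- Two distinct blocks of the family `π` cross: there are `a < b < c < d` with
`a, c` in one block and `b, d` in a different block. -/
def IsCrossing (π : Finset (Finset ℕ)) : Prop :=
  ∃ A ∈ π, ∃ B ∈ π, A ≠ B ∧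
    ∃ a ∈ A, ∃ b ∈ B, ∃ c ∈ A, ∃ d ∈ B, a < b ∧ b < c ∧ c < d

/-- `α ∈ NC(n)`: a non-crossing partition of `{1,…,n}`. -/
def IsNCPartition (n : ℕ) (α : Finset (Finset ℕ)) : Prop :=
  IsPartitionOf n α ∧ ¬ IsCrossing α

/-- Reverse refinement order `α ≤ β`: every block of `α` is contained in a block of `β`
(equivalently, every block of `β` is a union of blocks of `α`). -/
def Refines (α β : Finset (Finset ℕ)) : Prop := ∀ V ∈ α, ∃ W ∈ β, V ⊆ W

/-- The partial order `α ≪ β`: `α ≤ β` and for every block `W` of `β` there is a block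
`V` of `α` containing both `min W` and `max W`. -/
def LL (α β : Finset (Finset ℕ)) : Prop :=
  Refines α β ∧ ∀ W ∈ β, ∃ V ∈ α, fmin W ∈ V ∧ fmax W ∈ V

/-- A block `V` (of `α`) is `β`-special: some block `W` of `β` has the same min and max. -/
def SpecialBlock (β : Finset (Finset ℕ)) (V : Finset ℕ) : Prop :=
  ∃ W ∈ β, fmin V = fmin W ∧ fmax V = fmax W

/-- `V` is an outer block of `α`: no block of `α` strictly nests around it. -/
def OuterBlock (α : Finset (Finset ℕ)) (V : Finset ℕ) : Prop :=
  ∀ V' ∈ α, ¬ (fmin V' < fmin V ∧ fmax V < fmax V')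

/-- `π` is a linked partition of the finite set `F ⊆ ℕ`. -/
def IsLinkedPartitionOfSet (F : Finset ℕ) (π : Finset (Finset ℕ)) : Prop :=
  (∀ A ∈ π, A.Nonempty) ∧ (∀ A ∈ π, A ⊆ F) ∧ (∀ m ∈ F, ∃ A ∈ π, m ∈ A) ∧
    ∀ A ∈ π, ∀ B ∈ π, A ≠ B →
      A ∩ B = ∅ ∨
        (2 ≤ A.card ∧ 2 ≤ B.card ∧ (A ∩ B).card = 1 ∧ fmin A ≠ fmin B ∧
          ∀ x ∈ A ∩ B, x = fmin A ∨ x = fmin B)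

/-- `π ∈ NCL(F)`: a non-crossing linked partition of the finite set `F`. -/
def IsNCLOfSet (F : Finset ℕ) (π : Finset (Finset ℕ)) : Prop :=
  IsLinkedPartitionOfSet F π ∧ ¬ IsCrossing π

/-- `π ∈ NCL(n)`: a non-crossing linked partition of `{1,…,n}`. -/
def IsNCL (n : ℕ) (π : Finset (Finset ℕ)) : Prop :=
  IsNCLOfSet (Finset.Icc 1 n) π

/-- The number of blocks of `π` containing `m`. -/
noncomputable def coverCount (π : Finset (Finset ℕ)) (m : ℕ) : ℕ :=
  (π.filter fun A => m ∈ A).card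

/-- `m` is singly-covered by `π`: it lies in exactly one block. -/
def SinglyCovered (π : Finset (Finset ℕ)) (m : ℕ) : Prop := coverCount π m = 1

/-- `m` is doubly-covered by `π`: it lies in exactly two blocks. -/
def DoublyCovered (π : Finset (Finset ℕ)) (m : ℕ) : Prop := coverCount π m = 2

/-- The partition `π̂` generated by the blocks of `π`: its blocks are the connected
components of the ground set under the relation of lying in a common block of `π`. -/
noncomputable def genPart (π : Finset (Finset ℕ)) : Finset (Finset ℕ) :=
  (π.sup id).image fun m =>
    (π.sup id).filter fun x =>
      Relation.EqvGen (fun a b => ∃ A ∈ π, a ∈ A ∧ b ∈ A) m x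

/-- The unlinking `π̌` of a linked partition `π`. -/
noncomputable def unlink (π : Finset (Finset ℕ)) : Finset (Finset ℕ) :=
  π.image fun A => if SinglyCovered π (fmin A) then A else A.erase (fmin A)

/-- The block of `α` containing `m` (empty if there is none). -/
noncomputable def blockOf (α : Finset (Finset ℕ)) (m : ℕ) : Finset ℕ :=
  (α.filter fun V => m ∈ V).sup id

/-- The successor of `m` in the cycle on the block `V` (elements in increasing order). -/
noncomputable def nextInBlock (V : Finset ℕ) (m : ℕ) : ℕ :=
  if m = fmax V then fmin V else fmin (V.filter fun x => m < x)

/-- The predecessor of `m` in the cycle on the block `V`. -/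
noncomputable def prevInBlock (V : Finset ℕ) (m : ℕ) : ℕ :=
  if m = fmin V then fmax V else fmax (V.filter fun x => x < m)

/-- The permutation `P_α` associated to a partition `α`, as a function: each block
`{i₁ < i₂ < ⋯ < iₘ}` becomes the cycle `i₁ ↦ i₂ ↦ ⋯ ↦ iₘ ↦ i₁`. -/
noncomputable def permOf (α : Finset (Finset ℕ)) (m : ℕ) : ℕ :=
  if m ∈ blockOf α m then nextInBlock (blockOf α m) m else m

/-- The inverse permutation `P_α⁻¹`, as a function. -/
noncomputable def permOfInv (α : Finset (Finset ℕ)) (m : ℕ) : ℕ :=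
  if m ∈ blockOf α m then prevInBlock (blockOf α m) m else m

/-- The action `τ·α` of a map `τ` on a partition `α = {V₁,…,V_p}`, giving
`{τ(V₁),…,τ(V_p)}`. -/
def mapPart (τ : ℕ → ℕ) (α : Finset (Finset ℕ)) : Finset (Finset ℕ) :=
  α.image fun V => V.image τ

/-- The cycled unlinking `π° := P_{π̂}⁻¹ · π̌`. -/
noncomputable def cycUnlink (π : Finset (Finset ℕ)) : Finset (Finset ℕ) :=
  mapPart (permOfInv (genPart π)) (unlink π)

/-- `NC(n)` as a finset. -/
noncomputable def NCF (n : ℕ) : Finset (Finset (Finset ℕ)) :=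
  ((Finset.Icc 1 n).powerset.powerset).filter (IsNCPartition n)

/-- `NCL(n)` as a finset. -/
noncomputable def NCLF (n : ℕ) : Finset (Finset (Finset ℕ)) :=
  ((Finset.Icc 1 n).powerset.powerset).filter (IsNCL n)

/-- The restriction `π|_E`: the blocks of `π` contained in `E`. -/
def restrictL (π : Finset (Finset ℕ)) (E : Finset ℕ) : Finset (Finset ℕ) :=
  π.filter fun A => A ⊆ E

/-- The partition `β₀` obtained from `β` by leaving blocks of size `≤ 2` intact and
breaking each block `W` with `|W| ≥ 3` into the doubleton `{min W, max W}` together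
with `|W| - 2` singletons. -/
noncomputable def breakBlocks (β : Finset (Finset ℕ)) : Finset (Finset ℕ) :=
  β.biUnion fun W =>
    if W.card ≤ 2 then {W}
    else insert {fmin W, fmax W} ((W \ {fmin W, fmax W}).image fun x => ({x} : Finset ℕ))

-- auxiliary development
lemma fmin_mem {A : Finset ℕ} (h : A.Nonempty) : fmin A ∈ A := by
  have := Nat.sInf_mem (s := (A : Set ℕ)) (by exact_mod_cast h.to_set)
  exact_mod_cast this

lemma fmin_le {A : Finset ℕ} {x : ℕ} (h : x ∈ A) : fmin A ≤ x :=
  Nat.sInf_le (by exact_mod_cast h)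

lemma fmax_mem {A : Finset ℕ} (h : A.Nonempty) : fmax A ∈ A := by
  have := Nat.sSup_mem (s := (A : Set ℕ)) (by exact_mod_cast h.to_set) A.finite_toSet.bddAbove
  exact_mod_cast this

lemma le_fmax {A : Finset ℕ} {x : ℕ} (h : x ∈ A) : x ≤ fmax A :=
  le_csSup A.finite_toSet.bddAbove (by exact_mod_cast h)

lemma fmax_empty : fmax (∅ : Finset ℕ) = 0 := by
  simp [fmax, csSup_empty]

def IsNCOfSet (F : Finset ℕ) (α : Finset (Finset ℕ)) : Prop :=
  IsPartitionOfSet F α ∧ ¬ IsCrossing α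

noncomputable def NCS (F : Finset ℕ) : Finset (Finset (Finset ℕ)) :=
  F.powerset.powerset.filter (IsNCOfSet F)

lemma mem_NCS {F : Finset ℕ} {α : Finset (Finset ℕ)} :
    α ∈ NCS F ↔ IsNCOfSet F α := by
  constructor
  · intro h; exact (Finset.mem_filter.1 h).2
  · intro h
    refine Finset.mem_filter.2 ⟨?_, h⟩
    simp only [Finset.mem_powerset]
    intro V hV
    simpa [Finset.mem_powerset] using h.1.2.1 V hV

lemma block_eq_of_mem {F : Finset ℕ} {α : Finset (Finset ℕ)} (hα : IsPartitionOfSet F α)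
    {V W : Finset ℕ} (hV : V ∈ α) (hW : W ∈ α) {x : ℕ} (hxV : x ∈ V) (hxW : x ∈ W) :
    V = W := by
  by_contra hne
  have := hα.2.2.2 V hV W hW hne
  have : x ∈ V ∩ W := Finset.mem_inter.2 ⟨hxV, hxW⟩
  rw [hα.2.2.2 V hV W hW hne] at this
  exact absurd this (Finset.notMem_empty x)

lemma blockOf_eq {α : Finset (Finset ℕ)}
    (hd : ∀ V ∈ α, ∀ W ∈ α, V ≠ W → V ∩ W = ∅)
    {V : Finset ℕ} (hV : V ∈ α) {m : ℕ} (hm : m ∈ V) : blockOf α m = V := by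
  have : α.filter (fun V => m ∈ V) = {V} := by
    apply Finset.eq_singleton_iff_unique_mem.2
    refine ⟨Finset.mem_filter.2 ⟨hV, hm⟩, ?_⟩
    intro W hW
    obtain ⟨hW, hmW⟩ := Finset.mem_filter.1 hW
    by_contra hne
    have h2 := hd W hW V hV hne
    have : m ∈ W ∩ V := Finset.mem_inter.2 ⟨hmW, hm⟩
    rw [h2] at this
    exact absurd this (Finset.notMem_empty m)
  rw [blockOf, this, Finset.sup_singleton, id]

-- transport: NC is preserved by strictly monotone bijections
lemma mapNC {F G : Finset ℕ} {f g : ℕ → ℕ}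
    (hf : ∀ x ∈ F, f x ∈ G) (hg : ∀ y ∈ G, g y ∈ F)
    (hgf : ∀ x ∈ F, g (f x) = x) (hfg : ∀ y ∈ G, f (g y) = y)
    (hmono : ∀ x ∈ F, ∀ y ∈ F, x < y → f x < f y)
    {α : Finset (Finset ℕ)} (hα : IsNCOfSet F α) :
    IsNCOfSet G (mapPart f α) := by
  obtain ⟨⟨hne, hsub, hcov, hdis⟩, hnc⟩ := hα
  have hinj : ∀ x ∈ F, ∀ y ∈ F, f x = f y → x = y := by
    intro x hx y hy hxy
    rw [← hgf x hx, ← hgf y hy, hxy]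
  have hlt : ∀ x ∈ F, ∀ y ∈ F, f x < f y → x < y := by
    intro x hx y hy hxy
    rcases lt_trichotomy x y with h | h | h
    · exact h
    · exact absurd hxy (by rw [h]; exact lt_irrefl _)
    · exact absurd (hmono y hy x hx h) (by omega)
  constructor
  · refine ⟨?_, ?_, ?_, ?_⟩
    · intro A hA
      obtain ⟨V, hV, rfl⟩ := Finset.mem_image.1 hA
      exact (hne V hV).image f
    · intro A hA
      obtain ⟨V, hV, rfl⟩ := Finset.mem_image.1 hA
      intro y hy
      obtain ⟨x, hx, rfl⟩ := Finset.mem_image.1 hy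
      exact hf x (hsub V hV hx)
    · intro m hm
      obtain ⟨V, hV, hmem⟩ := hcov (g m) (hg m hm)
      exact ⟨V.image f, Finset.mem_image_of_mem _ hV,
        by rw [← hfg m hm]; exact Finset.mem_image_of_mem f hmem⟩
    · intro A hA B hB hAB
      obtain ⟨V, hV, rfl⟩ := Finset.mem_image.1 hA
      obtain ⟨W, hW, rfl⟩ := Finset.mem_image.1 hB
      rw [Finset.eq_empty_iff_forall_notMem]
      intro z hz
      obtain ⟨hz1, hz2⟩ := Finset.mem_inter.1 hz
      obtain ⟨v, hv, rfl⟩ := Finset.mem_image.1 hz1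
      obtain ⟨w, hw, hvw⟩ := Finset.mem_image.1 hz2
      have : w = v := hinj w (hsub W hW hw) v (hsub V hV hv) hvw
      subst this
      have : V = W := block_eq_of_mem ⟨hne, hsub, hcov, hdis⟩ hV hW hv hw
      exact hAB (by rw [this])
  · intro hc
    obtain ⟨A, hA, B, hB, hAB, a, ha, b, hb, c, hc', d, hd, h1, h2, h3⟩ := hc
    obtain ⟨V, hV, rfl⟩ := Finset.mem_image.1 hA
    obtain ⟨W, hW, rfl⟩ := Finset.mem_image.1 hB
    obtain ⟨a', ha', rfl⟩ := Finset.mem_image.1 ha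
    obtain ⟨b', hb', rfl⟩ := Finset.mem_image.1 hb
    obtain ⟨c', hc'', rfl⟩ := Finset.mem_image.1 hc'
    obtain ⟨d', hd', rfl⟩ := Finset.mem_image.1 hd
    have hVW : V ≠ W := fun h => hAB (by rw [h])
    have haF := hsub V hV ha'
    have hbF := hsub W hW hb'
    have hcF := hsub V hV hc''
    have hdF := hsub W hW hd'
    exact hnc ⟨V, hV, W, hW, hVW, a', ha', b', hb', c', hc'', d', hd',
      hlt _ haF _ hbF h1, hlt _ hbF _ hcF h2, hlt _ hcF _ hdF h3⟩
lemma mapPart_inv {F : Finset ℕ} {f g : ℕ → ℕ} (hgf : ∀ x ∈ F, g (f x) = x)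
    {α : Finset (Finset ℕ)} (hsub : ∀ V ∈ α, V ⊆ F) :
    mapPart g (mapPart f α) = α := by
  have hVid : ∀ V : Finset ℕ, V ⊆ F → (V.image f).image g = V := by
    intro V hV
    rw [Finset.image_image]
    refine (Finset.image_congr fun x hx => hgf x (hV hx)).trans Finset.image_id
  unfold mapPart
  rw [Finset.image_image]
  refine (Finset.image_congr fun V hV => ?_).trans Finset.image_id
  exact hVid V (hsub V hV)

lemma NCS_card_transport {F G : Finset ℕ} {f g : ℕ → ℕ}
    (hf : ∀ x ∈ F, f x ∈ G) (hg : ∀ y ∈ G, g y ∈ F)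
    (hgf : ∀ x ∈ F, g (f x) = x) (hfg : ∀ y ∈ G, f (g y) = y)
    (hmono : ∀ x ∈ F, ∀ y ∈ F, x < y → f x < f y) :
    (NCS F).card = (NCS G).card := by
  have hgmono : ∀ x ∈ G, ∀ y ∈ G, x < y → g x < g y := by
    intro x hx y hy hxy
    rcases lt_trichotomy (g x) (g y) with h | h | h
    · exact h
    · exact absurd hxy (by rw [← hfg x hx, ← hfg y hy, h]; exact lt_irrefl _)
    · have := hmono _ (hg y hy) _ (hg x hx) h
      rw [hfg x hx, hfg y hy] at this; omega
  refine Finset.card_bij (fun α _ => mapPart f α) ?_ ?_ ?_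
  · intro α hα
    exact mem_NCS.2 (mapNC hf hg hgf hfg hmono (mem_NCS.1 hα))
  · intro α₁ h₁ α₂ h₂ heq
    have s₁ := (mem_NCS.1 h₁).1.2.1
    have s₂ := (mem_NCS.1 h₂).1.2.1
    rw [← mapPart_inv hgf s₁, ← mapPart_inv hgf s₂, heq]
  · intro β hβ
    have sβ := (mem_NCS.1 hβ).1.2.1
    refine ⟨mapPart g β, mem_NCS.2 (mapNC hg hf hfg hgf hgmono (mem_NCS.1 hβ)), ?_⟩
    exact mapPart_inv hfg sβ
lemma NCS_card_eq_of_card_eq {F G : Finset ℕ} (h : F.card = G.card) :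
    (NCS F).card = (NCS G).card := by
  set k := F.card with hk
  have e : Fin k ≃o {x // x ∈ F} := F.orderIsoOfFin rfl
  have e2 : Fin k ≃o {x // x ∈ G} := G.orderIsoOfFin h.symm
  classical
  set f : ℕ → ℕ := fun x => if hx : x ∈ F then (e2 (e.symm ⟨x, hx⟩) : ℕ) else 0 with hfdef
  set g : ℕ → ℕ := fun y => if hy : y ∈ G then (e (e2.symm ⟨y, hy⟩) : ℕ) else 0 with hgdef
  refine NCS_card_transport (f := f) (g := g) ?_ ?_ ?_ ?_ ?_
  · intro x hx; simp only [hfdef, dif_pos hx]; exact (e2 (e.symm ⟨x, hx⟩)).2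
  · intro y hy; simp only [hgdef, dif_pos hy]; exact (e (e2.symm ⟨y, hy⟩)).2
  · intro x hx
    simp only [hfdef, hgdef, dif_pos hx]
    have hm : ((e2 (e.symm ⟨x, hx⟩)) : ℕ) ∈ G := (e2 (e.symm ⟨x, hx⟩)).2
    rw [dif_pos hm]
    have : (⟨(e2 (e.symm ⟨x, hx⟩) : ℕ), hm⟩ : {x // x ∈ G}) = e2 (e.symm ⟨x, hx⟩) :=
      Subtype.ext rfl
    rw [this, e2.symm_apply_apply, e.apply_symm_apply]
  · intro y hy
    simp only [hfdef, hgdef, dif_pos hy]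
    have hm : ((e (e2.symm ⟨y, hy⟩)) : ℕ) ∈ F := (e (e2.symm ⟨y, hy⟩)).2
    rw [dif_pos hm]
    have : (⟨(e (e2.symm ⟨y, hy⟩) : ℕ), hm⟩ : {x // x ∈ F}) = e (e2.symm ⟨y, hy⟩) :=
      Subtype.ext rfl
    rw [this, e.symm_apply_apply, e2.apply_symm_apply]
  · intro x hx y hy hxy
    simp only [hfdef, dif_pos hx, dif_pos hy]
    exact Subtype.coe_lt_coe.2 (e2.lt_iff_lt.2 (e.symm.lt_iff_lt.2 (Subtype.mk_lt_mk.2 hxy)))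

lemma NCS_empty : NCS (∅ : Finset ℕ) = {∅} := by
  apply Finset.eq_singleton_iff_unique_mem.2
  constructor
  · exact mem_NCS.2 ⟨⟨by simp, by simp, by simp, by simp⟩, by rintro ⟨A, hA, _⟩; simp at hA⟩
  · intro α hα
    obtain ⟨⟨hne, hsub, _, _⟩, _⟩ := mem_NCS.1 hα
    rw [Finset.eq_empty_iff_forall_notMem]
    intro V hV
    obtain ⟨x, hx⟩ := hne V hV
    exact absurd (hsub V hV hx) (Finset.notMem_empty x)

lemma NCS_card_empty_ground {F : Finset ℕ} (h : F = ∅) : (NCS F).card = 1 := by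
  rw [h, NCS_empty]; rfl
noncomputable def topBlock (n : ℕ) (α : Finset (Finset ℕ)) : Finset ℕ := blockOf α (n+1)
noncomputable def jOf (n : ℕ) (α : Finset (Finset ℕ)) : ℕ := fmax ((topBlock n α).erase (n+1))
noncomputable def fwdG (n : ℕ) (α : Finset (Finset ℕ)) : Finset (Finset ℕ) :=
  restrictL α (Finset.Icc 1 (jOf n α)) ∪
    (if jOf n α = 0 then ∅ else {(topBlock n α).erase (n+1)})
noncomputable def fwdD (n : ℕ) (α : Finset (Finset ℕ)) : Finset (Finset ℕ) :=
  restrictL α (Finset.Icc (jOf n α + 1) n)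
noncomputable def recon (n : ℕ) (j : ℕ) (γ δ : Finset (Finset ℕ)) : Finset (Finset ℕ) :=
  insert ((blockOf γ j) ∪ {n+1}) ((γ.erase (blockOf γ j)) ∪ δ)

lemma top_structure {n : ℕ} {α : Finset (Finset ℕ)} (hα : α ∈ NCS (Finset.Icc 1 (n+1))) :
    topBlock n α ∈ α ∧ (n+1) ∈ topBlock n α ∧ jOf n α ≤ n ∧
    (∀ x ∈ (topBlock n α).erase (n+1), 1 ≤ x ∧ x ≤ jOf n α) ∧
    ((topBlock n α).erase (n+1) ≠ ∅ → jOf n α ∈ (topBlock n α).erase (n+1)) ∧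
    (jOf n α = 0 ↔ (topBlock n α).erase (n+1) = ∅) ∧
    (∀ V ∈ α, V ≠ topBlock n α →
      (V ⊆ Finset.Icc 1 (jOf n α) ∨ V ⊆ Finset.Icc (jOf n α + 1) n)) := by
  obtain ⟨⟨hne, hsub, hcov, hdis⟩, hnc⟩ := mem_NCS.1 hα
  obtain ⟨B₀, hB₀, hmem₀⟩ := hcov (n+1) (by simp)
  have hB : topBlock n α ∈ α := by rw [topBlock, blockOf_eq hdis hB₀ hmem₀]; exact hB₀
  have hmem : (n+1) ∈ topBlock n α := by rw [topBlock, blockOf_eq hdis hB₀ hmem₀]; exact hmem₀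
  set B := topBlock n α
  set E := B.erase (n+1) with hE
  set j := jOf n α with hj
  have hEB : E ⊆ B := Finset.erase_subset _ _
  have hEIcc : ∀ x ∈ E, 1 ≤ x ∧ x ≤ n := by
    intro x hx
    have h1 := Finset.mem_Icc.1 (hsub B hB (hEB hx))
    have h2 := (Finset.mem_erase.1 hx).1
    omega
  have hjE : E ≠ ∅ → j ∈ E := by
    intro h
    exact fmax_mem (Finset.nonempty_iff_ne_empty.2 h)
  have hjub : ∀ x ∈ E, x ≤ j := fun x hx => le_fmax hx
  have hj0 : j = 0 ↔ E = ∅ := by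
    constructor
    · intro h
      by_contra hne'
      have := hEIcc j (hjE hne')
      omega
    · intro h; rw [hj, jOf, ← hE, h]; exact fmax_empty
  have hjn : j ≤ n := by
    by_cases h : E = ∅
    · rw [hj0.2 h]; omega
    · exact (hEIcc j (hjE h)).2
  refine ⟨hB, hmem, hjn, fun x hx => ⟨(hEIcc x hx).1, hjub x hx⟩, hjE, hj0, ?_⟩
  intro V hV hVB
  by_cases hall : ∀ x ∈ V, x ≤ j
  · left
    intro x hx
    have h1 := Finset.mem_Icc.1 (hsub V hV hx)
    exact Finset.mem_Icc.2 ⟨h1.1, hall x hx⟩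
  · right
    push_neg at hall
    obtain ⟨y, hy, hyj⟩ := hall
    intro x hx
    have hx1 := Finset.mem_Icc.1 (hsub V hV hx)
    have hxn : x ≠ n+1 := by
      intro h; subst h
      exact hVB (block_eq_of_mem ⟨hne, hsub, hcov, hdis⟩ hV hB hx hmem)
    have hy1 := Finset.mem_Icc.1 (hsub V hV hy)
    have hyn : y ≠ n+1 := by
      intro h; subst h
      exact hVB (block_eq_of_mem ⟨hne, hsub, hcov, hdis⟩ hV hB hy hmem)
    refine Finset.mem_Icc.2 ⟨?_, by omega⟩
    by_contra hxj
    push_neg at hxj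
    have hxle : x ≤ j := by omega
    have hjE' : j ∈ E := by
      apply hjE
      intro h
      have := hj0.2 h
      omega
    have hjB : j ∈ B := hEB hjE'
    have hxj' : x < j := by
      rcases lt_or_eq_of_le hxle with h | h
      · exact h
      · exfalso; subst h
        exact hVB (block_eq_of_mem ⟨hne, hsub, hcov, hdis⟩ hV hB hx hjB)
    exact hnc ⟨V, hV, B, hB, hVB, x, hx, j, hjB, y, hy, n+1, hmem, hxj', by omega, by omega⟩
lemma mem_fwdG {n : ℕ} {α : Finset (Finset ℕ)} {V : Finset ℕ} :
    V ∈ fwdG n α ↔ (V ∈ α ∧ V ⊆ Finset.Icc 1 (jOf n α)) ∨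
      (jOf n α ≠ 0 ∧ V = (topBlock n α).erase (n+1)) := by
  unfold fwdG restrictL
  by_cases h : jOf n α = 0 <;>
    simp [h, Finset.mem_union, Finset.mem_filter, and_comm] <;> tauto

lemma mem_fwdD {n : ℕ} {α : Finset (Finset ℕ)} {V : Finset ℕ} :
    V ∈ fwdD n α ↔ V ∈ α ∧ V ⊆ Finset.Icc (jOf n α + 1) n := by
  unfold fwdD restrictL; simp [Finset.mem_filter]

lemma fwd_mem {n : ℕ} {α : Finset (Finset ℕ)} (hα : α ∈ NCS (Finset.Icc 1 (n+1))) :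
    fwdG n α ∈ NCS (Finset.Icc 1 (jOf n α)) ∧ fwdD n α ∈ NCS (Finset.Icc (jOf n α + 1) n) := by
  obtain ⟨hB, hmem, hjn, hEbd, hjE, hj0, hsplit⟩ := top_structure hα
  obtain ⟨⟨hne, hsub, hcov, hdis⟩, hnc⟩ := mem_NCS.1 hα
  set B := topBlock n α
  set E := B.erase (n+1) with hE
  set j := jOf n α with hj
  have hP : IsPartitionOfSet (Finset.Icc 1 (n+1)) α := ⟨hne, hsub, hcov, hdis⟩
  have hBnotIcc : ¬ B ⊆ Finset.Icc 1 j := by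
    intro h
    have := Finset.mem_Icc.1 (h hmem)
    omega
  have hEnotα : ∀ V ∈ α, V ⊆ Finset.Icc 1 j → V ≠ E := by
    intro V hV hVI hVE
    have hEne : E ≠ ∅ := by
      intro h; rw [h] at hVE
      exact Finset.nonempty_iff_ne_empty.1 (hne V hV) hVE
    have hjE' := hjE hEne
    have : j ∈ V := by rw [hVE]; exact hjE'
    have : V = B := block_eq_of_mem hP hV hB this (Finset.erase_subset _ _ hjE')
    exact hBnotIcc (this ▸ hVI)
  constructor
  · refine mem_NCS.2 ⟨⟨?_, ?_, ?_, ?_⟩, ?_⟩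
    · intro V hV
      rcases mem_fwdG.1 hV with ⟨hV, _⟩ | ⟨hjne, rfl⟩
      · exact hne V hV
      · exact Finset.nonempty_iff_ne_empty.2 (fun h => hjne (hj0.2 h))
    · intro V hV
      rcases mem_fwdG.1 hV with ⟨_, h⟩ | ⟨hjne, rfl⟩
      · exact h
      · intro x hx
        have := hEbd x hx
        exact Finset.mem_Icc.2 ⟨this.1, this.2⟩
    · intro m hm
      obtain ⟨hm1, hm2⟩ := Finset.mem_Icc.1 hm
      obtain ⟨V, hV, hmV⟩ := hcov m (Finset.mem_Icc.2 ⟨hm1, by omega⟩)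
      by_cases hVB : V = B
      · subst hVB
        have hmE : m ∈ E := Finset.mem_erase.2 ⟨by omega, hmV⟩
        exact ⟨E, mem_fwdG.2 (Or.inr ⟨by omega, rfl⟩), hmE⟩
      · rcases hsplit V hV hVB with h | h
        · exact ⟨V, mem_fwdG.2 (Or.inl ⟨hV, h⟩), hmV⟩
        · have := Finset.mem_Icc.1 (h hmV); omega
    · intro V hV W hW hVW
      rw [Finset.eq_empty_iff_forall_notMem]
      intro x hx
      obtain ⟨hxV, hxW⟩ := Finset.mem_inter.1 hx
      rcases mem_fwdG.1 hV with ⟨hV', hVI⟩ | ⟨_, rfl⟩ <;>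
        rcases mem_fwdG.1 hW with ⟨hW', hWI⟩ | ⟨_, rfl⟩
      · exact hVW (block_eq_of_mem hP hV' hW' hxV hxW)
      · have : V = B := block_eq_of_mem hP hV' hB hxV (Finset.erase_subset _ _ hxW)
        exact hBnotIcc (this ▸ hVI)
      · have : W = B := block_eq_of_mem hP hW' hB hxW (Finset.erase_subset _ _ hxV)
        exact hBnotIcc (this ▸ hWI)
      · exact hVW rfl
    · intro hc
      obtain ⟨X, hX, Y, hY, hXY, a, ha, b, hb, c, hc', d, hd, h1, h2, h3⟩ := hc
      have lift : ∀ Z ∈ fwdG n α, ∃ Z' ∈ α, Z ⊆ Z' ∧ (Z = E → Z' = B) ∧ (Z ≠ E → Z' = Z) := by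
        intro Z hZ
        rcases mem_fwdG.1 hZ with ⟨hZ', hZI⟩ | ⟨hjne, rfl⟩
        · exact ⟨Z, hZ', Finset.Subset.refl _, fun h => absurd h (hEnotα Z hZ' hZI), fun _ => rfl⟩
        · by_cases hEB : E = B
          · exact ⟨B, hB, hEB ▸ Finset.Subset.refl _, fun _ => rfl, fun h => absurd rfl h⟩
          · exact ⟨B, hB, Finset.erase_subset _ _, fun _ => rfl, fun h => absurd rfl h⟩
      obtain ⟨X', hX', hXs, hXE, hXnE⟩ := lift X hX
      obtain ⟨Y', hY', hYs, hYE, hYnE⟩ := lift Y hY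
      have hX'Y' : X' ≠ Y' := by
        by_cases h1' : X = E <;> by_cases h2' : Y = E
        · exact absurd (h1'.trans h2'.symm) hXY
        · rw [hXE h1', hYnE h2']
          intro h
          rcases mem_fwdG.1 hY with ⟨_, hYI⟩ | ⟨_, h2''⟩
          · exact hBnotIcc (h ▸ hYI)
          · exact h2' h2''
        · rw [hXnE h1', hYE h2']
          intro h
          rcases mem_fwdG.1 hX with ⟨_, hXI⟩ | ⟨_, h1''⟩
          · exact hBnotIcc (h.symm ▸ hXI)
          · exact h1' h1''
        · rw [hXnE h1', hYnE h2']; exact hXY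
      exact hnc ⟨X', hX', Y', hY', hX'Y', a, hXs ha, b, hYs hb, c, hXs hc', d, hYs hd, h1, h2, h3⟩
  · refine mem_NCS.2 ⟨⟨?_, ?_, ?_, ?_⟩, ?_⟩
    · intro V hV; exact hne V (mem_fwdD.1 hV).1
    · intro V hV; exact (mem_fwdD.1 hV).2
    · intro m hm
      obtain ⟨hm1, hm2⟩ := Finset.mem_Icc.1 hm
      obtain ⟨V, hV, hmV⟩ := hcov m (Finset.mem_Icc.2 ⟨by omega, by omega⟩)
      by_cases hVB : V = B
      · subst hVB
        have hmE : m ∈ E := Finset.mem_erase.2 ⟨by omega, hmV⟩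
        have := hEbd m hmE; omega
      · rcases hsplit V hV hVB with h | h
        · have := Finset.mem_Icc.1 (h hmV); omega
        · exact ⟨V, mem_fwdD.2 ⟨hV, h⟩, hmV⟩
    · intro V hV W hW hVW
      exact hdis V (mem_fwdD.1 hV).1 W (mem_fwdD.1 hW).1 hVW
    · intro hc
      obtain ⟨X, hX, Y, hY, hXY, rest⟩ := hc
      exact hnc ⟨X, (mem_fwdD.1 hX).1, Y, (mem_fwdD.1 hY).1, hXY, rest⟩
lemma recon_fwd {n : ℕ} {α : Finset (Finset ℕ)} (hα : α ∈ NCS (Finset.Icc 1 (n+1))) :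
    recon n (jOf n α) (fwdG n α) (fwdD n α) = α := by
  obtain ⟨hB, hmem, hjn, hEbd, hjE, hj0, hsplit⟩ := top_structure hα
  obtain ⟨⟨hne, hsub, hcov, hdis⟩, hnc⟩ := mem_NCS.1 hα
  have hP : IsPartitionOfSet (Finset.Icc 1 (n+1)) α := ⟨hne, hsub, hcov, hdis⟩
  obtain ⟨hGmem, hDmem⟩ := fwd_mem hα
  obtain ⟨⟨hGne, hGsub, hGcov, hGdis⟩, hGnc⟩ := mem_NCS.1 hGmem
  set B := topBlock n α
  set E := B.erase (n+1) with hEdef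
  set j := jOf n α with hj
  by_cases hjz : j = 0
  · -- E = ∅, B = {n+1}, fwdG = ∅
    have hEe : E = ∅ := hj0.1 hjz
    have hBsing : B = {n+1} := by
      rw [← Finset.insert_erase hmem, ← hEdef, hEe]; rfl
    have hGe : fwdG n α = ∅ := by
      rw [Finset.eq_empty_iff_forall_notMem]
      intro V hV
      rcases mem_fwdG.1 hV with ⟨hV', hVI⟩ | ⟨hjne, _⟩
      · obtain ⟨x, hx⟩ := hne V hV'
        have := Finset.mem_Icc.1 (hVI hx)
        omega
      · exact hjne hjz
    rw [recon, hGe]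
    have hblk : blockOf (∅ : Finset (Finset ℕ)) j = ∅ := by
      rw [blockOf]; simp
    rw [hblk]
    simp only [Finset.empty_union, Finset.erase_empty]
    -- goal: insert {n+1}?  ∅ ∪ {n+1} = {n+1}
    apply Finset.Subset.antisymm
    · intro V hV
      rcases Finset.mem_insert.1 hV with rfl | hV
      · rwa [← hBsing]
      · exact (mem_fwdD.1 hV).1
    · intro V hV
      by_cases hVB : V = B
      · subst hVB; rw [hBsing]; exact Finset.mem_insert_self _ _
      · rcases hsplit V hV hVB with h | h
        · exfalso
          obtain ⟨x, hx⟩ := hne V hV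
          have := Finset.mem_Icc.1 (h hx)
          omega
        · exact Finset.mem_insert_of_mem (mem_fwdD.2 ⟨hV, h⟩)
  · -- j ≥ 1 case
    have hEne : E ≠ ∅ := fun h => hjz (hj0.2 h)
    have hjE' := hjE hEne
    have hEG : E ∈ fwdG n α := mem_fwdG.2 (Or.inr ⟨hjz, rfl⟩)
    have hblk : blockOf (fwdG n α) j = E := blockOf_eq hGdis hEG hjE'
    rw [recon, hblk]
    have hEB : E ∪ {n+1} = B := by
      rw [Finset.union_comm, ← Finset.insert_eq, hEdef, Finset.insert_erase hmem]
    rw [hEB]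
    have hGerase : (fwdG n α).erase E = restrictL α (Finset.Icc 1 j) := by
      apply Finset.Subset.antisymm
      · intro V hV
        obtain ⟨hVE, hV'⟩ := Finset.mem_erase.1 hV
        rcases mem_fwdG.1 hV' with ⟨h1, h2⟩ | ⟨_, h⟩
        · exact Finset.mem_filter.2 ⟨h1, h2⟩
        · exact absurd h hVE
      · intro V hV
        obtain ⟨h1, h2⟩ := Finset.mem_filter.1 hV
        refine Finset.mem_erase.2 ⟨?_, mem_fwdG.2 (Or.inl ⟨h1, h2⟩)⟩
        intro hVE
        have : j ∈ V := hVE ▸ hjE'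
        have : V = B := block_eq_of_mem hP h1 hB this (Finset.erase_subset _ _ hjE')
        subst this
        have := Finset.mem_Icc.1 (h2 hmem)
        omega
    rw [hGerase]
    apply Finset.Subset.antisymm
    · intro V hV
      rcases Finset.mem_insert.1 hV with rfl | hV
      · exact hB
      · rcases Finset.mem_union.1 hV with h | h
        · exact (Finset.mem_filter.1 h).1
        · exact (mem_fwdD.1 h).1
    · intro V hV
      by_cases hVB : V = B
      · subst hVB; exact Finset.mem_insert_self _ _
      · rcases hsplit V hV hVB with h | h
        · exact Finset.mem_insert_of_mem (Finset.mem_union_left _ (Finset.mem_filter.2 ⟨hV, h⟩))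
        · exact Finset.mem_insert_of_mem (Finset.mem_union_right _ (mem_fwdD.2 ⟨hV, h⟩))
lemma mem_recon {n j : ℕ} {γ δ : Finset (Finset ℕ)} {X : Finset ℕ} :
    X ∈ recon n j γ δ ↔ X = (blockOf γ j) ∪ {n+1} ∨ (X ∈ γ ∧ X ≠ blockOf γ j) ∨ X ∈ δ := by
  unfold recon
  simp [Finset.mem_insert, Finset.mem_union, Finset.mem_erase, and_comm]

lemma recon_mem {n j : ℕ} {γ δ : Finset (Finset ℕ)} (hjn : j ≤ n)
    (hγ : γ ∈ NCS (Finset.Icc 1 j)) (hδ : δ ∈ NCS (Finset.Icc (j+1) n)) :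
    recon n j γ δ ∈ NCS (Finset.Icc 1 (n+1)) := by
  obtain ⟨⟨γne, γsub, γcov, γdis⟩, γnc⟩ := mem_NCS.1 hγ
  obtain ⟨⟨δne, δsub, δcov, δdis⟩, δnc⟩ := mem_NCS.1 hδ
  have γP : IsPartitionOfSet (Finset.Icc 1 j) γ := ⟨γne, γsub, γcov, γdis⟩
  set Bγ := blockOf γ j with hBγdef
  have hγel : ∀ V ∈ γ, ∀ x ∈ V, 1 ≤ x ∧ x ≤ j := by
    intro V hV x hx; exact Finset.mem_Icc.1 (γsub V hV hx)
  have hδel : ∀ V ∈ δ, ∀ x ∈ V, j+1 ≤ x ∧ x ≤ n := by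
    intro V hV x hx; exact Finset.mem_Icc.1 (δsub V hV hx)
  have hcase : (j = 0 ∧ γ = ∅ ∧ Bγ = ∅) ∨ (1 ≤ j ∧ Bγ ∈ γ ∧ j ∈ Bγ) := by
    by_cases hjz : j = 0
    · left
      refine ⟨hjz, ?_, ?_⟩
      · rw [Finset.eq_empty_iff_forall_notMem]
        intro V hV
        obtain ⟨x, hx⟩ := γne V hV
        have := hγel V hV x hx; omega
      · rw [hBγdef, blockOf, Finset.filter_eq_empty_iff.2, Finset.sup_empty]; rfl
        intro V hV
        intro hjV
        have := hγel V hV j hjV; omega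
    · right
      obtain ⟨V, hV, hjV⟩ := γcov j (Finset.mem_Icc.2 ⟨by omega, le_refl _⟩)
      rw [hBγdef, blockOf_eq γdis hV hjV]
      exact ⟨by omega, hV, hjV⟩
  have hBγsub : Bγ ⊆ Finset.Icc 1 j := by
    rcases hcase with ⟨_, _, h⟩ | ⟨_, h, _⟩
    · rw [h]; exact Finset.empty_subset _
    · exact γsub _ h
  have hBγel : ∀ x ∈ Bγ, 1 ≤ x ∧ x ≤ j := fun x hx => Finset.mem_Icc.1 (hBγsub hx)
  have hn1B : n+1 ∈ Bγ ∪ {n+1} := Finset.mem_union_right _ (Finset.mem_singleton_self _)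
  have hn1 : ∀ x ∈ Bγ ∪ {n+1}, x ∈ Bγ ∨ x = n+1 := by
    intro x hx
    rcases Finset.mem_union.1 hx with h | h
    · exact Or.inl h
    · exact Or.inr (Finset.mem_singleton.1 h)
  refine mem_NCS.2 ⟨⟨?_, ?_, ?_, ?_⟩, ?_⟩
  · intro V hV
    rcases mem_recon.1 hV with rfl | ⟨hV, _⟩ | hV
    · exact ⟨n+1, hn1B⟩
    · exact γne V hV
    · exact δne V hV
  · intro V hV
    rcases mem_recon.1 hV with rfl | ⟨hV, _⟩ | hV
    · intro x hx
      rcases hn1 x hx with h | rfl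
      · have := hBγel x h; exact Finset.mem_Icc.2 ⟨this.1, by omega⟩
      · exact Finset.mem_Icc.2 ⟨by omega, le_refl _⟩
    · intro x hx
      have := hγel V hV x hx; exact Finset.mem_Icc.2 ⟨this.1, by omega⟩
    · intro x hx
      have := hδel V hV x hx; exact Finset.mem_Icc.2 ⟨by omega, by omega⟩
  · intro m hm
    obtain ⟨hm1, hm2⟩ := Finset.mem_Icc.1 hm
    by_cases hmn : m = n+1
    · exact ⟨Bγ ∪ {n+1}, mem_recon.2 (Or.inl rfl), hmn ▸ hn1B⟩
    · by_cases hmj : m ≤ j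
      · obtain ⟨V, hV, hmV⟩ := γcov m (Finset.mem_Icc.2 ⟨hm1, hmj⟩)
        by_cases hVB : V = Bγ
        · exact ⟨Bγ ∪ {n+1}, mem_recon.2 (Or.inl rfl),
            Finset.mem_union_left _ (hVB ▸ hmV)⟩
        · exact ⟨V, mem_recon.2 (Or.inr (Or.inl ⟨hV, hVB⟩)), hmV⟩
      · obtain ⟨V, hV, hmV⟩ := δcov m (Finset.mem_Icc.2 ⟨by omega, by omega⟩)
        exact ⟨V, mem_recon.2 (Or.inr (Or.inr hV)), hmV⟩
  · intro V hV W hW hVW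
    rw [Finset.eq_empty_iff_forall_notMem]
    intro x hx
    obtain ⟨hxV, hxW⟩ := Finset.mem_inter.1 hx
    have key : ∀ P Q : Finset ℕ, P ∈ γ → P ≠ Bγ → Q = Bγ ∪ {n+1} → x ∈ P → x ∈ Q → False := by
      intro P Q hP hPB hQ hxP hxQ
      subst hQ
      rcases hn1 x hxQ with h | rfl
      · rcases hcase with ⟨_, _, hB0⟩ | ⟨_, hBm, _⟩
        · rw [hB0] at h; exact Finset.notMem_empty x h
        · exact hPB (block_eq_of_mem γP hP hBm hxP h)
      · have := hγel P hP _ hxP; omega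
    have keyδ : ∀ P Q : Finset ℕ, P ∈ δ → Q = Bγ ∪ {n+1} → x ∈ P → x ∈ Q → False := by
      intro P Q hP hQ hxP hxQ
      subst hQ
      rcases hn1 x hxQ with h | rfl
      · have h1 := hBγel x h
        have h2 := hδel P hP x hxP
        omega
      · have := hδel P hP _ hxP; omega
    have keyγδ : ∀ P Q : Finset ℕ, P ∈ γ → Q ∈ δ → x ∈ P → x ∈ Q → False := by
      intro P Q hP hQ hxP hxQ
      have h1 := hγel P hP x hxP
      have h2 := hδel Q hQ x hxQ
      omega
    rcases mem_recon.1 hV with h1 | ⟨h1, h1'⟩ | h1 <;>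
      rcases mem_recon.1 hW with h2 | ⟨h2, h2'⟩ | h2
    · exact hVW (h1.trans h2.symm)
    · exact key W V h2 h2' h1 hxW hxV
    · exact keyδ W V h2 h1 hxW hxV
    · exact key V W h1 h1' h2 hxV hxW
    · exact hVW (block_eq_of_mem γP h1 h2 hxV hxW)
    · exact keyγδ V W h1 h2 hxV hxW
    · exact keyδ V W h1 h2 hxV hxW
    · exact keyγδ W V h2 h1 hxW hxV
    · exact hVW (block_eq_of_mem ⟨δne, δsub, δcov, δdis⟩ h1 h2 hxV hxW)
  · intro hc
    obtain ⟨X, hX, Y, hY, hXY, a, ha, b, hb, c, hc', d, hd, h1, h2, h3⟩ := hc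
    -- case analysis on X and Y
    rcases mem_recon.1 hX with hX1 | ⟨hX1, hX1'⟩ | hX1 <;>
      rcases mem_recon.1 hY with hY1 | ⟨hY1, hY1'⟩ | hY1
    · exact hXY (hX1.trans hY1.symm)
    · -- X = Bfull, Y ∈ γ'
      subst hX1
      have hdY := hγel Y hY1 d hd
      have haB : a ∈ Bγ := by
        rcases hn1 a ha with h | rfl
        · exact h
        · omega
      have hcB : c ∈ Bγ := by
        rcases hn1 c hc' with h | rfl
        · exact h
        · omega
      rcases hcase with ⟨_, hγ0, _⟩ | ⟨_, hBm, _⟩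
      · rw [hγ0] at hY1; exact Finset.notMem_empty Y hY1
      · exact γnc ⟨Bγ, hBm, Y, hY1, fun h => hY1' h.symm, a, haB, b, hb, c, hcB, d, hd, h1, h2, h3⟩
    · -- X = Bfull, Y ∈ δ
      subst hX1
      have hbY := hδel Y hY1 b hb
      have hdY := hδel Y hY1 d hd
      rcases hn1 c hc' with h | rfl
      · have := hBγel c h; omega
      · omega
    · -- X ∈ γ', Y = Bfull
      subst hY1
      have haX := hγel X hX1 a ha
      have hcX := hγel X hX1 c hc'
      have hbB : b ∈ Bγ := by
        rcases hn1 b hb with h | rfl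
        · exact h
        · omega
      rcases hcase with ⟨_, hγ0, _⟩ | ⟨_, hBm, hjB⟩
      · rw [hγ0] at hX1; exact Finset.notMem_empty X hX1
      · rcases hn1 d hd with hdB | rfl
        · exact γnc ⟨X, hX1, Bγ, hBm, hX1', a, ha, b, hbB, c, hc', d, hdB, h1, h2, h3⟩
        · have hcj : c ≠ j := by
            intro h; subst h
            exact hX1' (block_eq_of_mem γP hX1 hBm hc' hjB)
          exact γnc ⟨X, hX1, Bγ, hBm, hX1', a, ha, b, hbB, c, hc', j, hjB, h1, h2, by omega⟩
    · exact γnc ⟨X, hX1, Y, hY1, hXY, a, ha, b, hb, c, hc', d, hd, h1, h2, h3⟩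
    · have h1' := hγel X hX1 c hc'
      have h2' := hδel Y hY1 b hb
      omega
    · -- X ∈ δ, Y = Bfull
      subst hY1
      have haX := hδel X hX1 a ha
      have hcX := hδel X hX1 c hc'
      rcases hn1 b hb with h | rfl
      · have := hBγel b h; omega
      · omega
    · have h1' := hδel X hX1 a ha
      have h2' := hγel Y hY1 b hb
      omega
    · exact δnc ⟨X, hX1, Y, hY1, hXY, a, ha, b, hb, c, hc', d, hd, h1, h2, h3⟩
lemma fwd_recon {n j : ℕ} {γ δ : Finset (Finset ℕ)} (hjn : j ≤ n)
    (hγ : γ ∈ NCS (Finset.Icc 1 j)) (hδ : δ ∈ NCS (Finset.Icc (j+1) n)) :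
    jOf n (recon n j γ δ) = j ∧ fwdG n (recon n j γ δ) = γ ∧ fwdD n (recon n j γ δ) = δ := by
  obtain ⟨⟨γne, γsub, γcov, γdis⟩, γnc⟩ := mem_NCS.1 hγ
  obtain ⟨⟨δne, δsub, δcov, δdis⟩, δnc⟩ := mem_NCS.1 hδ
  have γP : IsPartitionOfSet (Finset.Icc 1 j) γ := ⟨γne, γsub, γcov, γdis⟩
  have hR := recon_mem hjn hγ hδ
  obtain ⟨⟨Rne, Rsub, Rcov, Rdis⟩, Rnc⟩ := mem_NCS.1 hR
  set Bγ := blockOf γ j with hBγdef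
  have hγel : ∀ V ∈ γ, ∀ x ∈ V, 1 ≤ x ∧ x ≤ j := by
    intro V hV x hx; exact Finset.mem_Icc.1 (γsub V hV hx)
  have hδel : ∀ V ∈ δ, ∀ x ∈ V, j+1 ≤ x ∧ x ≤ n := by
    intro V hV x hx; exact Finset.mem_Icc.1 (δsub V hV hx)
  have hcase : (j = 0 ∧ γ = ∅ ∧ Bγ = ∅) ∨ (1 ≤ j ∧ Bγ ∈ γ ∧ j ∈ Bγ) := by
    by_cases hjz : j = 0
    · left
      refine ⟨hjz, ?_, ?_⟩
      · rw [Finset.eq_empty_iff_forall_notMem]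
        intro V hV
        obtain ⟨x, hx⟩ := γne V hV
        have := hγel V hV x hx; omega
      · rw [hBγdef, blockOf, Finset.filter_eq_empty_iff.2, Finset.sup_empty]; rfl
        intro V hV hjV
        have := hγel V hV j hjV; omega
    · right
      obtain ⟨V, hV, hjV⟩ := γcov j (Finset.mem_Icc.2 ⟨by omega, le_refl _⟩)
      rw [hBγdef, blockOf_eq γdis hV hjV]
      exact ⟨by omega, hV, hjV⟩
  have hBγsub : Bγ ⊆ Finset.Icc 1 j := by
    rcases hcase with ⟨_, _, h⟩ | ⟨_, h, _⟩
    · rw [h]; exact Finset.empty_subset _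
    · exact γsub _ h
  have hBγel : ∀ x ∈ Bγ, 1 ≤ x ∧ x ≤ j := fun x hx => Finset.mem_Icc.1 (hBγsub hx)
  have hn1B : n+1 ∈ Bγ ∪ {n+1} := Finset.mem_union_right _ (Finset.mem_singleton_self _)
  have hBfull : Bγ ∪ {n+1} ∈ recon n j γ δ := mem_recon.2 (Or.inl rfl)
  have htop : topBlock n (recon n j γ δ) = Bγ ∪ {n+1} := by
    rw [topBlock, blockOf_eq Rdis hBfull hn1B]
  have herase : (Bγ ∪ {n+1}).erase (n+1) = Bγ := by
    apply Finset.Subset.antisymm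
    · intro x hx
      obtain ⟨hx1, hx2⟩ := Finset.mem_erase.1 hx
      rcases Finset.mem_union.1 hx2 with h | h
      · exact h
      · exact absurd (Finset.mem_singleton.1 h) hx1
    · intro x hx
      refine Finset.mem_erase.2 ⟨?_, Finset.mem_union_left _ hx⟩
      have := hBγel x hx; omega
  have hjof : jOf n (recon n j γ δ) = j := by
    rw [jOf, htop, herase]
    rcases hcase with ⟨hjz, _, hB0⟩ | ⟨hj1, _, hjB⟩
    · rw [hB0, fmax_empty, hjz]
    · apply le_antisymm
      · have := hBγel _ (fmax_mem ⟨j, hjB⟩); exact this.2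
      · exact le_fmax hjB
  refine ⟨hjof, ?_, ?_⟩
  · -- fwdG = γ
    have hres : restrictL (recon n j γ δ) (Finset.Icc 1 j) = γ.erase Bγ := by
      apply Finset.Subset.antisymm
      · intro V hV
        obtain ⟨hV1, hV2⟩ := Finset.mem_filter.1 hV
        rcases mem_recon.1 hV1 with h | ⟨h, h'⟩ | h
        · exfalso
          have := Finset.mem_Icc.1 (hV2 (h ▸ hn1B))
          omega
        · exact Finset.mem_erase.2 ⟨h', h⟩
        · exfalso
          obtain ⟨x, hx⟩ := δne V h
          have h1 := hδel V h x hx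
          have h2 := Finset.mem_Icc.1 (hV2 hx)
          omega
      · intro V hV
        obtain ⟨hV1, hV2⟩ := Finset.mem_erase.1 hV
        exact Finset.mem_filter.2 ⟨mem_recon.2 (Or.inr (Or.inl ⟨hV2, hV1⟩)), γsub V hV2⟩
    rw [fwdG, hjof, hres, htop, herase]
    rcases hcase with ⟨hjz, hγ0, hB0⟩ | ⟨hj1, hBm, _⟩
    · rw [if_pos hjz, hγ0, hB0]
      simp
    · rw [if_neg (by omega)]
      apply Finset.Subset.antisymm
      · intro V hV
        rcases Finset.mem_union.1 hV with h | h
        · exact (Finset.mem_erase.1 h).2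
        · rw [Finset.mem_singleton.1 h]; exact hBm
      · intro V hV
        by_cases hVB : V = Bγ
        · exact Finset.mem_union_right _ (Finset.mem_singleton.2 hVB)
        · exact Finset.mem_union_left _ (Finset.mem_erase.2 ⟨hVB, hV⟩)
  · -- fwdD = δ
    rw [fwdD, hjof]
    apply Finset.Subset.antisymm
    · intro V hV
      obtain ⟨hV1, hV2⟩ := Finset.mem_filter.1 hV
      rcases mem_recon.1 hV1 with h | ⟨h, _⟩ | h
      · exfalso
        have := Finset.mem_Icc.1 (hV2 (h ▸ hn1B))
        omega
      · exfalso
        obtain ⟨x, hx⟩ := γne V h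
        have h1 := hγel V h x hx
        have h2 := Finset.mem_Icc.1 (hV2 hx)
        omega
      · exact h
    · intro V hV
      exact Finset.mem_filter.2 ⟨mem_recon.2 (Or.inr (Or.inr hV)), δsub V hV⟩

attribute [local irreducible] fmin fmax
lemma NCS_succ_card_eq (m : ℕ) : (NCS (Finset.Icc 1 (m+1))).card =
    ((Finset.range (m+1)).sigma
      (fun j => (NCS (Finset.Icc 1 j)) ×ˢ (NCS (Finset.Icc (j+1) m)))).card := by
  refine Finset.card_bij (fun α _ => ⟨jOf m α, (fwdG m α, fwdD m α)⟩) ?_ ?_ ?_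
  · intro α hα
    obtain ⟨_, _, hjn, _⟩ := top_structure hα
    obtain ⟨h1, h2⟩ := fwd_mem hα
    exact Finset.mem_sigma.2 ⟨Finset.mem_range.2 (Nat.lt_succ_of_le hjn),
      Finset.mem_product.2 ⟨h1, h2⟩⟩
  · intro α₁ h₁ α₂ h₂ heq
    have e1 : jOf m α₁ = jOf m α₂ := congrArg Sigma.fst heq
    have e2 : fwdG m α₁ = fwdG m α₂ := congrArg (fun p => p.2.1) heq
    have e3 : fwdD m α₁ = fwdD m α₂ := congrArg (fun p => p.2.2) heq
    rw [← recon_fwd h₁, ← recon_fwd h₂, e1, e2, e3]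
  · rintro ⟨j, γ, δ⟩ hb
    obtain ⟨hj, hgd⟩ := Finset.mem_sigma.1 hb
    obtain ⟨hγ, hδ⟩ := Finset.mem_product.1 hgd
    have hjm : j ≤ m := Nat.lt_succ_iff.1 (Finset.mem_range.1 hj)
    obtain ⟨e1, e2, e3⟩ := fwd_recon hjm hγ hδ
    refine ⟨recon m j γ δ, recon_mem hjm hγ hδ, ?_⟩
    rw [e1, e2, e3]

lemma NCS_Icc_card : ∀ n : ℕ, (NCS (Finset.Icc 1 n)).card = catalan n := by
  intro n
  induction n using Nat.strong_induction_on with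
  | _ n ih =>
    match n with
    | 0 =>
      rw [show Finset.Icc 1 0 = (∅ : Finset ℕ) from Finset.Icc_eq_empty (by omega),
        NCS_empty, catalan_zero]
      rfl
    | Nat.succ m =>
      have hshift : ∀ j, j ≤ m →
          (NCS (Finset.Icc (j+1) m)).card = (NCS (Finset.Icc 1 (m - j))).card := by
        intro j hjm
        refine NCS_card_transport (f := fun x => x - j) (g := fun x => x + j) ?_ ?_ ?_ ?_ ?_
        · intro x hx
          have := Finset.mem_Icc.1 hx
          refine Finset.mem_Icc.2 ?_
          omega
        · intro y hy
          have := Finset.mem_Icc.1 hy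
          refine Finset.mem_Icc.2 ?_
          omega
        · intro x hx; have := Finset.mem_Icc.1 hx; omega
        · intro y hy; have := Finset.mem_Icc.1 hy; omega
        · intro x hx y hy hxy
          have := Finset.mem_Icc.1 hx
          omega
      rw [NCS_succ_card_eq m, Finset.card_sigma]
      rw [catalan_succ m, Fin.sum_univ_eq_sum_range (fun i => catalan i * catalan (m - i)) (m+1)]
      refine Finset.sum_congr rfl ?_
      intro j hj
      have hjm : j ≤ m := Nat.lt_succ_iff.1 (Finset.mem_range.1 hj)
      rw [Finset.card_product, ih j (by omega), hshift j hjm, ih (m - j) (by omega)]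

lemma NCS_card (F : Finset ℕ) : (NCS F).card = catalan F.card := by
  have h : F.card = (Finset.Icc 1 F.card).card := by
    rw [Nat.card_Icc]; omega
  rw [NCS_card_eq_of_card_eq h, NCS_Icc_card]

lemma NCS_singleton (x : ℕ) : NCS ({x} : Finset ℕ) = {{{x}}} := by
  apply Finset.eq_singleton_iff_unique_mem.2
  constructor
  · refine mem_NCS.2 ⟨⟨?_, ?_, ?_, ?_⟩, ?_⟩
    · intro V hV; rw [Finset.mem_singleton.1 hV]; exact ⟨x, Finset.mem_singleton_self x⟩
    · intro V hV; rw [Finset.mem_singleton.1 hV]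
    · intro m hm
      exact ⟨{x}, Finset.mem_singleton_self _, hm⟩
    · intro V hV W hW hVW
      exact absurd ((Finset.mem_singleton.1 hV).trans (Finset.mem_singleton.1 hW).symm) hVW
    · rintro ⟨A, hA, B, hB, hAB, _⟩
      exact hAB ((Finset.mem_singleton.1 hA).trans (Finset.mem_singleton.1 hB).symm)
  · intro α hα
    obtain ⟨⟨hne, hsub, hcov, hdis⟩, _⟩ := mem_NCS.1 hα
    obtain ⟨V, hV, hxV⟩ := hcov x (Finset.mem_singleton_self x)
    have hVx : V = {x} := Finset.Subset.antisymm (hsub V hV) (Finset.singleton_subset_iff.2 hxV)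
    apply Finset.eq_singleton_iff_unique_mem.2
    refine ⟨hVx ▸ hV, ?_⟩
    intro W hW
    obtain ⟨y, hy⟩ := hne W hW
    have : y = x := Finset.mem_singleton.1 (hsub W hW hy)
    subst this
    rw [block_eq_of_mem ⟨hne, hsub, hcov, hdis⟩ hW hV hy hxV, hVx]

lemma spec_card (F : Finset ℕ) (hF : F.Nonempty) :
    ((NCS F).filter (fun γ => ∃ V ∈ γ, fmin F ∈ V ∧ fmax F ∈ V)).card
      = catalan (F.card - 1) := by
  by_cases hc1 : F.card = 1
  · obtain ⟨x, rfl⟩ := Finset.card_eq_one.1 hc1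
    have hmin : fmin {x} = x := Finset.mem_singleton.1 (fmin_mem ⟨x, Finset.mem_singleton_self x⟩)
    have hmax : fmax {x} = x := Finset.mem_singleton.1 (fmax_mem ⟨x, Finset.mem_singleton_self x⟩)
    rw [NCS_singleton, hc1]
    rw [show (1:ℕ) - 1 = 0 from rfl, catalan_zero]
    rw [Finset.filter_singleton, if_pos]
    · rfl
    · exact ⟨{x}, Finset.mem_singleton_self _, by rw [hmin]; exact Finset.mem_singleton_self x,
        by rw [hmax]; exact Finset.mem_singleton_self x⟩
  · -- card ≥ 2
    have hc2 : 2 ≤ F.card := by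
      have := Finset.card_pos.2 hF
      omega
    set m0 := fmin F with hm0
    set M := fmax F with hM
    have hm0F : m0 ∈ F := fmin_mem hF
    have hMF : M ∈ F := fmax_mem hF
    have hm0M : m0 < M := by
      rcases lt_or_eq_of_le (le_fmax hm0F) with h | h
      · exact h
      · exfalso
        obtain ⟨a, ha, b, hb, hab⟩ := Finset.one_lt_card.1 hc2
        have h1 := fmin_le ha
        have h2 := le_fmax ha
        have h3 := fmin_le hb
        have h4 := le_fmax hb
        rw [← hm0] at h1 h3
        rw [← hM] at h2 h4 h
        exact hab (by omega)
    have helt : ∀ x ∈ F.erase M, m0 ≤ x ∧ x < M := by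
      intro x hx
      obtain ⟨h1, h2⟩ := Finset.mem_erase.1 hx
      have := fmin_le h2
      have := le_fmax h2
      constructor
      · omega
      · rcases lt_or_eq_of_le (le_fmax h2) with h | h
        · exact h
        · exact absurd h h1
    have hm0e : m0 ∈ F.erase M := Finset.mem_erase.2 ⟨by omega, hm0F⟩
    rw [show F.card - 1 = (F.erase M).card by rw [Finset.card_erase_of_mem hMF], ← NCS_card]
    refine Finset.card_bij (fun γ _ => γ.image (fun V => V.erase M)) ?_ ?_ ?_
    · -- maps to
      intro γ hγ
      obtain ⟨hγN, S, hS, hm0S, hMS⟩ := Finset.mem_filter.1 hγ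
      obtain ⟨⟨hne, hsub, hcov, hdis⟩, hnc⟩ := mem_NCS.1 hγN
      have hP : IsPartitionOfSet F γ := ⟨hne, hsub, hcov, hdis⟩
      have hMnot : ∀ V ∈ γ, V ≠ S → M ∉ V := by
        intro V hV hVS hMV
        exact hVS (block_eq_of_mem hP hV hS hMV hMS)
      have hkeep : ∀ V ∈ γ, V ≠ S → V.erase M = V := by
        intro V hV hVS
        exact Finset.erase_eq_of_notMem (hMnot V hV hVS)
      have hmemi : ∀ X, X ∈ γ.image (fun V => V.erase M) ↔
          ((X ∈ γ ∧ X ≠ S) ∨ X = S.erase M) := by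
        intro X
        constructor
        · intro hX
          obtain ⟨V, hV, rfl⟩ := Finset.mem_image.1 hX
          by_cases hVS : V = S
          · exact Or.inr (by rw [hVS])
          · rw [hkeep V hV hVS]
            left
            refine ⟨hV, ?_⟩
            intro h
            exact hMnot V hV hVS (h ▸ hMS)
        · intro hX
          rcases hX with ⟨hX, hXS⟩ | rfl
          · exact Finset.mem_image.2 ⟨X, hX, hkeep X hX hXS⟩
          · exact Finset.mem_image.2 ⟨S, hS, rfl⟩
      have hexcl : ∀ X ∈ γ, X ≠ S → X ≠ S.erase M := by
        intro X hX hXS h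
        have : m0 ∈ X := h ▸ Finset.mem_erase.2 ⟨by omega, hm0S⟩
        exact hXS (block_eq_of_mem hP hX hS this hm0S)
      have hpar : ∀ X ∈ γ.image (fun V => V.erase M),
          ∃ X' ∈ γ, X ⊆ X' ∧ ((X = S.erase M → X' = S) ∧ (X ≠ S.erase M → X' = X)) := by
        intro X hX
        rcases (hmemi X).1 hX with ⟨h1, h2⟩ | rfl
        · exact ⟨X, h1, Finset.Subset.refl _, fun h => absurd h (hexcl X h1 h2),
            fun _ => rfl⟩
        · exact ⟨S, hS, Finset.erase_subset _ _, fun _ => rfl,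
            fun h => absurd rfl h⟩
      refine mem_NCS.2 ⟨⟨?_, ?_, ?_, ?_⟩, ?_⟩
      · intro X hX
        rcases (hmemi X).1 hX with ⟨h1, _⟩ | rfl
        · exact hne X h1
        · exact ⟨m0, Finset.mem_erase.2 ⟨by omega, hm0S⟩⟩
      · intro X hX x hx
        obtain ⟨X', hX', hsub', _⟩ := hpar X hX
        obtain ⟨V, hV, rfl⟩ := Finset.mem_image.1 hX
        obtain ⟨hxM, hxV⟩ := Finset.mem_erase.1 hx
        exact Finset.mem_erase.2 ⟨hxM, hsub V hV hxV⟩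
      · intro x hx
        obtain ⟨hxM, hxF⟩ := Finset.mem_erase.1 hx
        obtain ⟨V, hV, hxV⟩ := hcov x hxF
        exact ⟨V.erase M, Finset.mem_image.2 ⟨V, hV, rfl⟩, Finset.mem_erase.2 ⟨hxM, hxV⟩⟩
      · intro X hX Y hY hXY
        rw [Finset.eq_empty_iff_forall_notMem]
        intro x hx
        obtain ⟨hxX, hxY⟩ := Finset.mem_inter.1 hx
        obtain ⟨X', hX', hsX, hXe⟩ := hpar X hX
        obtain ⟨Y', hY', hsY, hYe⟩ := hpar Y hY
        have hX'Y' : X' ≠ Y' := by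
          by_cases e1 : X = S.erase M <;> by_cases e2 : Y = S.erase M
          · exact absurd (e1.trans e2.symm) hXY
          · rw [hXe.1 e1, hYe.2 e2]
            intro h
            rcases (hmemi Y).1 hY with ⟨h1, h2⟩ | h3
            · exact h2 h.symm
            · exact e2 h3
          · rw [hXe.2 e1, hYe.1 e2]
            intro h
            rcases (hmemi X).1 hX with ⟨h1, h2⟩ | h3
            · exact h2 h
            · exact e1 h3
          · rw [hXe.2 e1, hYe.2 e2]; exact hXY
        exact hX'Y' (block_eq_of_mem hP hX' hY' (hsX hxX) (hsY hxY))
      · intro hcr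
        obtain ⟨X, hX, Y, hY, hXY, a, ha, b, hb, c, hc', d, hd, h1, h2, h3⟩ := hcr
        obtain ⟨X', hX', hsX, hXe⟩ := hpar X hX
        obtain ⟨Y', hY', hsY, hYe⟩ := hpar Y hY
        have hX'Y' : X' ≠ Y' := by
          by_cases e1 : X = S.erase M <;> by_cases e2 : Y = S.erase M
          · exact absurd (e1.trans e2.symm) hXY
          · rw [hXe.1 e1, hYe.2 e2]
            intro h
            rcases (hmemi Y).1 hY with ⟨g1, g2⟩ | g3
            · exact g2 h.symm
            · exact e2 g3
          · rw [hXe.2 e1, hYe.1 e2]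
            intro h
            rcases (hmemi X).1 hX with ⟨g1, g2⟩ | g3
            · exact g2 h
            · exact e1 g3
          · rw [hXe.2 e1, hYe.2 e2]; exact hXY
        exact hnc ⟨X', hX', Y', hY', hX'Y', a, hsX ha, b, hsY hb, c, hsX hc', d, hsY hd,
          h1, h2, h3⟩
    · -- injective
      intro γ₁ hγ₁ γ₂ hγ₂ heq
      have recon2 : ∀ γ ∈ (NCS F).filter (fun γ => ∃ V ∈ γ, fmin F ∈ V ∧ fmax F ∈ V),
          insert (insert M (blockOf (γ.image (fun V => V.erase M)) m0))
            ((γ.image (fun V => V.erase M)).erase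
              (blockOf (γ.image (fun V => V.erase M)) m0)) = γ := by
        intro γ hγ
        obtain ⟨hγN, S, hS, hm0S, hMS⟩ := Finset.mem_filter.1 hγ
        obtain ⟨⟨hne, hsub, hcov, hdis⟩, hnc⟩ := mem_NCS.1 hγN
        have hP : IsPartitionOfSet F γ := ⟨hne, hsub, hcov, hdis⟩
        have hMnot : ∀ V ∈ γ, V ≠ S → M ∉ V := by
          intro V hV hVS hMV
          exact hVS (block_eq_of_mem hP hV hS hMV hMS)
        have hkeep : ∀ V ∈ γ, V ≠ S → V.erase M = V := by
          intro V hV hVS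
          exact Finset.erase_eq_of_notMem (hMnot V hV hVS)
        have hmemi : ∀ X, X ∈ γ.image (fun V => V.erase M) ↔
            ((X ∈ γ ∧ X ≠ S) ∨ X = S.erase M) := by
          intro X
          constructor
          · intro hX
            obtain ⟨V, hV, rfl⟩ := Finset.mem_image.1 hX
            by_cases hVS : V = S
            · exact Or.inr (by rw [hVS])
            · rw [hkeep V hV hVS]
              exact Or.inl ⟨hV, fun h => hMnot V hV hVS (h ▸ hMS)⟩
          · intro hX
            rcases hX with ⟨hX, hXS⟩ | rfl
            · exact Finset.mem_image.2 ⟨X, hX, hkeep X hX hXS⟩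
            · exact Finset.mem_image.2 ⟨S, hS, rfl⟩
        have hexcl : ∀ X ∈ γ, X ≠ S → X ≠ S.erase M := by
          intro X hX hXS h
          have : m0 ∈ X := h ▸ Finset.mem_erase.2 ⟨by omega, hm0S⟩
          exact hXS (block_eq_of_mem hP hX hS this hm0S)
        -- blockOf of image at m0 is S.erase M
        have hm0Se : m0 ∈ S.erase M := Finset.mem_erase.2 ⟨by omega, hm0S⟩
        have hSei : S.erase M ∈ γ.image (fun V => V.erase M) := (hmemi _).2 (Or.inr rfl)
        have hdisi : ∀ X ∈ γ.image (fun V => V.erase M), ∀ Y ∈ γ.image (fun V => V.erase M),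
            X ≠ Y → X ∩ Y = ∅ := by
          intro X hX Y hY hXY
          rw [Finset.eq_empty_iff_forall_notMem]
          intro x hx
          obtain ⟨hxX, hxY⟩ := Finset.mem_inter.1 hx
          rcases (hmemi X).1 hX with ⟨g1, g2⟩ | g3 <;> rcases (hmemi Y).1 hY with ⟨f1, f2⟩ | f3
          · exact hXY (block_eq_of_mem hP g1 f1 hxX hxY)
          · subst f3
            exact g2 (block_eq_of_mem hP g1 hS hxX (Finset.erase_subset _ _ hxY))
          · subst g3
            exact f2 (block_eq_of_mem hP f1 hS hxY (Finset.erase_subset _ _ hxX))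
          · exact hXY (g3.trans f3.symm)
        have hblk : blockOf (γ.image (fun V => V.erase M)) m0 = S.erase M :=
          blockOf_eq hdisi hSei hm0Se
        rw [hblk, Finset.insert_erase hMS]
        have her : (γ.image (fun V => V.erase M)).erase (S.erase M) = γ.erase S := by
          apply Finset.Subset.antisymm
          · intro X hX
            obtain ⟨hX1, hX2⟩ := Finset.mem_erase.1 hX
            rcases (hmemi X).1 hX2 with ⟨g1, g2⟩ | g3
            · exact Finset.mem_erase.2 ⟨g2, g1⟩
            · exact absurd g3 hX1
          · intro X hX
            obtain ⟨hX1, hX2⟩ := Finset.mem_erase.1 hX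
            exact Finset.mem_erase.2 ⟨hexcl X hX2 hX1, (hmemi X).2 (Or.inl ⟨hX2, hX1⟩)⟩
        rw [her, Finset.insert_erase hS]
      have := recon2 γ₁ hγ₁
      rw [← this, ← recon2 γ₂ hγ₂, heq]
    · -- surjective
      intro δ hδ
      obtain ⟨⟨δne, δsub, δcov, δdis⟩, δnc⟩ := mem_NCS.1 hδ
      have δP : IsPartitionOfSet (F.erase M) δ := ⟨δne, δsub, δcov, δdis⟩
      obtain ⟨U, hU, hm0U⟩ := δcov m0 hm0e
      have hMU : M ∉ U := by
        intro h
        have := helt M (δsub U hU h)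
        omega
      set R := insert (insert M U) (δ.erase U) with hR
      have hmemR : ∀ X, X ∈ R ↔ X = insert M U ∨ (X ∈ δ ∧ X ≠ U) := by
        intro X
        rw [hR]
        simp [Finset.mem_insert, Finset.mem_erase, and_comm]
      have hRN : R ∈ NCS F := by
        refine mem_NCS.2 ⟨⟨?_, ?_, ?_, ?_⟩, ?_⟩
        · intro X hX
          rcases (hmemR X).1 hX with rfl | ⟨h1, _⟩
          · exact ⟨M, Finset.mem_insert_self _ _⟩
          · exact δne X h1
        · intro X hX x hx
          rcases (hmemR X).1 hX with rfl | ⟨h1, _⟩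
          · rcases Finset.mem_insert.1 hx with rfl | h
            · exact hMF
            · exact Finset.mem_of_mem_erase (δsub U hU h)
          · exact Finset.mem_of_mem_erase (δsub X h1 hx)
        · intro x hx
          by_cases hxM : x = M
          · exact ⟨insert M U, (hmemR _).2 (Or.inl rfl), hxM ▸ Finset.mem_insert_self _ _⟩
          · obtain ⟨V, hV, hxV⟩ := δcov x (Finset.mem_erase.2 ⟨hxM, hx⟩)
            by_cases hVU : V = U
            · exact ⟨insert M U, (hmemR _).2 (Or.inl rfl),
                Finset.mem_insert_of_mem (hVU ▸ hxV)⟩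
            · exact ⟨V, (hmemR _).2 (Or.inr ⟨hV, hVU⟩), hxV⟩
        · intro X hX Y hY hXY
          rw [Finset.eq_empty_iff_forall_notMem]
          intro x hx
          obtain ⟨hxX, hxY⟩ := Finset.mem_inter.1 hx
          have hkey : ∀ P Q : Finset ℕ, P = insert M U → Q ∈ δ → Q ≠ U →
              x ∈ P → x ∈ Q → False := by
            intro P Q hP hQ hQU hxP hxQ
            subst hP
            rcases Finset.mem_insert.1 hxP with rfl | h
            · have := helt M (δsub Q hQ hxQ); omega
            · exact hQU (block_eq_of_mem δP hQ hU hxQ h)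
          rcases (hmemR X).1 hX with h1 | ⟨h1, h1'⟩ <;>
            rcases (hmemR Y).1 hY with h2 | ⟨h2, h2'⟩
          · exact hXY (h1.trans h2.symm)
          · exact hkey X Y h1 h2 h2' hxX hxY
          · exact hkey Y X h2 h1 h1' hxY hxX
          · exact hXY (block_eq_of_mem δP h1 h2 hxX hxY)
        · intro hcr
          obtain ⟨X, hX, Y, hY, hXY, a, ha, b, hb, c, hc', d, hd, h1, h2, h3⟩ := hcr
          have hlt : ∀ V ∈ δ, ∀ x ∈ V, m0 ≤ x ∧ x < M := by
            intro V hV x hx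
            exact helt x (δsub V hV hx)
          rcases (hmemR X).1 hX with hX1 | ⟨hX1, hX1'⟩ <;>
            rcases (hmemR Y).1 hY with hY1 | ⟨hY1, hY1'⟩
          · exact hXY (hX1.trans hY1.symm)
          · -- X = insert M U, Y ∈ δ'
            subst hX1
            have hbY := hlt Y hY1 b hb
            have hdY := hlt Y hY1 d hd
            have haU : a ∈ U := by
              rcases Finset.mem_insert.1 ha with rfl | h
              · omega
              · exact h
            have hcU : c ∈ U := by
              rcases Finset.mem_insert.1 hc' with rfl | h
              · omega
              · exact h
            exact δnc ⟨U, hU, Y, hY1, fun h => hY1' h.symm, a, haU, b, hb, c, hcU, d, hd,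
              h1, h2, h3⟩
          · -- X ∈ δ', Y = insert M U
            subst hY1
            have haX := hlt X hX1 a ha
            have hcX := hlt X hX1 c hc'
            have hbU : b ∈ U := by
              rcases Finset.mem_insert.1 hb with rfl | h
              · omega
              · exact h
            rcases Finset.mem_insert.1 hd with rfl | hdU
            · -- d = M, use m0
              have hm0a : m0 < a := by
                rcases lt_or_eq_of_le haX.1 with h | h
                · exact h
                · exfalso
                  exact hX1' (block_eq_of_mem δP hX1 hU (h ▸ ha) hm0U)
              exact δnc ⟨U, hU, X, hX1, fun h => hX1' h.symm, m0, hm0U, a, ha, b, hbU,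
                c, hc', hm0a, h1, h2⟩
            · exact δnc ⟨X, hX1, U, hU, hX1', a, ha, b, hbU, c, hc', d, hdU, h1, h2, h3⟩
          · exact δnc ⟨X, hX1, Y, hY1, hXY, a, ha, b, hb, c, hc', d, hd, h1, h2, h3⟩
      refine ⟨R, Finset.mem_filter.2 ⟨hRN, insert M U, (hmemR _).2 (Or.inl rfl),
        Finset.mem_insert_of_mem hm0U, Finset.mem_insert_self _ _⟩, ?_⟩
      -- image of R under erase M = δ
      rw [hR, Finset.image_insert]
      have e1 : (insert M U).erase M = U := by
        rw [Finset.erase_insert hMU]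
      have e2 : (δ.erase U).image (fun V => V.erase M) = δ.erase U := by
        refine (Finset.image_congr ?_).trans Finset.image_id
        intro V hV
        simp only
        apply Finset.erase_eq_of_notMem
        intro hMV
        have := helt M (δsub V (Finset.mem_of_mem_erase hV) hMV)
        omega
      rw [e1, e2, Finset.insert_erase hU]

/-- Let `β = {W₁,…,W_q} ∈ NC(n)`. Then the number of `α ∈ NC(n)` with
`α ≪ β` equals `∏_j Cat_{|W_j| - 1}`. -/
theorem stmt5 (n : ℕ) (β : Finset (Finset ℕ)) (hβ : IsNCPartition n β) :
    {α : Finset (Finset ℕ) | IsNCPartition n α ∧ LL α β}.ncard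
      = ∏ W ∈ β, catalan (W.card - 1) := by
  classical
  obtain ⟨⟨βne, βsub, βcov, βdis⟩, βnc⟩ := hβ
  have βP : IsPartitionOfSet (Finset.Icc 1 n) β := ⟨βne, βsub, βcov, βdis⟩
  have hset : {α : Finset (Finset ℕ) | IsNCPartition n α ∧ LL α β}
      = ↑((NCS (Finset.Icc 1 n)).filter (fun α => LL α β)) := by
    ext α
    simp only [Set.mem_setOf_eq, Finset.coe_filter, Finset.mem_coe, Set.mem_setOf_eq,
      Finset.mem_filter]
    constructor
    · rintro ⟨h1, h2⟩
      exact ⟨mem_NCS.2 h1, h2⟩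
    · rintro ⟨h1, h2⟩
      exact ⟨mem_NCS.1 h1, h2⟩
  rw [hset, Set.ncard_coe_finset]
  set t : Finset ℕ → Finset (Finset (Finset ℕ)) :=
    fun W => (NCS W).filter (fun γ => ∃ V ∈ γ, fmin W ∈ V ∧ fmax W ∈ V) with ht
  have hcard : ((NCS (Finset.Icc 1 n)).filter (fun α => LL α β)).card = (β.pi t).card := by
    refine Finset.card_bij (fun α _ => fun W _ => restrictL α W) ?_ ?_ ?_
    · intro α hα
      obtain ⟨hαN, href, hmm⟩ := Finset.mem_filter.1 hα
      obtain ⟨⟨hne, hsub, hcov, hdis⟩, hnc⟩ := mem_NCS.1 hαN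
      refine Finset.mem_pi.2 ?_
      intro W hW
      have hres : ∀ V, V ∈ restrictL α W ↔ V ∈ α ∧ V ⊆ W := by
        intro V; exact Finset.mem_filter
      refine Finset.mem_filter.2 ⟨mem_NCS.2 ⟨⟨?_, ?_, ?_, ?_⟩, ?_⟩, ?_⟩
      · intro V hV; exact hne V ((hres V).1 hV).1
      · intro V hV; exact ((hres V).1 hV).2
      · intro m hm
        obtain ⟨V, hV, hmV⟩ := hcov m (βsub W hW hm)
        obtain ⟨W', hW', hVW'⟩ := href V hV
        have : W' = W := block_eq_of_mem βP hW' hW (hVW' hmV) hm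
        subst this
        exact ⟨V, (hres V).2 ⟨hV, hVW'⟩, hmV⟩
      · intro V hV V' hV' hne'
        exact hdis V ((hres V).1 hV).1 V' ((hres V').1 hV').1 hne'
      · intro hcr
        obtain ⟨X, hX, Y, hY, hXY, rest⟩ := hcr
        exact hnc ⟨X, ((hres X).1 hX).1, Y, ((hres Y).1 hY).1, hXY, rest⟩
      · obtain ⟨V, hV, h1, h2⟩ := hmm W hW
        obtain ⟨W', hW', hVW'⟩ := href V hV
        have hfm : fmin W ∈ W := fmin_mem (βne W hW)
        have : W' = W := block_eq_of_mem βP hW' hW (hVW' h1) hfm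
        subst this
        exact ⟨V, (hres V).2 ⟨hV, hVW'⟩, h1, h2⟩
    · intro α₁ h₁ α₂ h₂ heq
      have hd : ∀ (α : Finset (Finset ℕ)), α ∈ (NCS (Finset.Icc 1 n)).filter (fun α => LL α β) →
          α = β.biUnion (fun W => restrictL α W) := by
        intro α hα
        obtain ⟨hαN, href, hmm⟩ := Finset.mem_filter.1 hα
        apply Finset.Subset.antisymm
        · intro V hV
          obtain ⟨W, hW, hVW⟩ := href V hV
          exact Finset.mem_biUnion.2 ⟨W, hW, Finset.mem_filter.2 ⟨hV, hVW⟩⟩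
        · intro V hV
          obtain ⟨W, hW, hVW⟩ := Finset.mem_biUnion.1 hV
          exact (Finset.mem_filter.1 hVW).1
      rw [hd α₁ h₁, hd α₂ h₂]
      refine Finset.biUnion_congr rfl ?_
      intro W hW
      exact congrFun (congrFun heq W) hW
    · intro g hg
      have hgW : ∀ (W : Finset ℕ) (hW : W ∈ β), g W hW ∈ t W := Finset.mem_pi.1 hg
      set A : Finset (Finset ℕ) := β.attach.biUnion (fun W => g W.1 W.2) with hA
      have hmemA : ∀ V, V ∈ A ↔ ∃ W, ∃ hW : W ∈ β, V ∈ g W hW := by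
        intro V
        rw [hA, Finset.mem_biUnion]
        constructor
        · rintro ⟨⟨W, hW⟩, _, h⟩
          exact ⟨W, hW, h⟩
        · rintro ⟨W, hW, h⟩
          exact ⟨⟨W, hW⟩, Finset.mem_attach _ _, h⟩
      have hfacts : ∀ (W : Finset ℕ) (hW : W ∈ β),
          IsNCOfSet W (g W hW) ∧ ∃ V ∈ g W hW, fmin W ∈ V ∧ fmax W ∈ V := by
        intro W hW
        obtain ⟨h1, h2⟩ := Finset.mem_filter.1 (hgW W hW)
        exact ⟨mem_NCS.1 h1, h2⟩
      have hWeq : ∀ (W : Finset ℕ) (hW : W ∈ β) (W' : Finset ℕ) (hW' : W' ∈ β)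
          (V : Finset ℕ), V ∈ g W hW → V ∈ g W' hW' → W = W' := by
        intro W hW W' hW' V h1 h2
        obtain ⟨x, hx⟩ := (hfacts W hW).1.1.1 V h1
        exact block_eq_of_mem βP hW hW'
          ((hfacts W hW).1.1.2.1 V h1 hx) ((hfacts W' hW').1.1.2.1 V h2 hx)
      have hAN : A ∈ (NCS (Finset.Icc 1 n)).filter (fun α => LL α β) := by
        refine Finset.mem_filter.2 ⟨mem_NCS.2 ⟨⟨?_, ?_, ?_, ?_⟩, ?_⟩, ?_, ?_⟩
        · intro V hV
          obtain ⟨W, hW, h⟩ := (hmemA V).1 hV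
          exact (hfacts W hW).1.1.1 V h
        · intro V hV
          obtain ⟨W, hW, h⟩ := (hmemA V).1 hV
          exact fun x hx => βsub W hW ((hfacts W hW).1.1.2.1 V h hx)
        · intro m hm
          obtain ⟨W, hW, hmW⟩ := βcov m hm
          obtain ⟨V, hV, hmV⟩ := (hfacts W hW).1.1.2.2.1 m hmW
          exact ⟨V, (hmemA V).2 ⟨W, hW, hV⟩, hmV⟩
        · intro V hV V' hV' hne'
          obtain ⟨W, hW, h⟩ := (hmemA V).1 hV
          obtain ⟨W', hW', h'⟩ := (hmemA V').1 hV'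
          rw [Finset.eq_empty_iff_forall_notMem]
          intro x hx
          obtain ⟨hx1, hx2⟩ := Finset.mem_inter.1 hx
          have hWW' : W = W' := block_eq_of_mem βP hW hW'
            ((hfacts W hW).1.1.2.1 V h hx1) ((hfacts W' hW').1.1.2.1 V' h' hx2)
          subst hWW'
          have : V = V' := block_eq_of_mem (hfacts W hW).1.1 h h' hx1 hx2
          exact hne' this
        · intro hcr
          obtain ⟨X, hX, Y, hY, hXY, a, ha, b, hb, c, hc', d, hd, h1, h2, h3⟩ := hcr
          obtain ⟨W, hW, h⟩ := (hmemA X).1 hX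
          obtain ⟨W', hW', h'⟩ := (hmemA Y).1 hY
          by_cases hWW' : W = W'
          · subst hWW'
            exact (hfacts W hW).1.2 ⟨X, h, Y, h', hXY, a, ha, b, hb, c, hc', d, hd, h1, h2, h3⟩
          · exact βnc ⟨W, hW, W', hW', hWW',
              a, (hfacts W hW).1.1.2.1 X h ha, b, (hfacts W' hW').1.1.2.1 Y h' hb,
              c, (hfacts W hW).1.1.2.1 X h hc', d, (hfacts W' hW').1.1.2.1 Y h' hd,
              h1, h2, h3⟩
        · intro V hV
          obtain ⟨W, hW, h⟩ := (hmemA V).1 hV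
          exact ⟨W, hW, fun x hx => (hfacts W hW).1.1.2.1 V h hx⟩
        · intro W hW
          obtain ⟨V, hV, h1, h2⟩ := (hfacts W hW).2
          exact ⟨V, (hmemA V).2 ⟨W, hW, hV⟩, h1, h2⟩
      refine ⟨A, hAN, ?_⟩
      funext W hW
      apply Finset.Subset.antisymm
      · intro V hV
        obtain ⟨hVA, hVW⟩ := Finset.mem_filter.1 hV
        obtain ⟨W', hW', h'⟩ := (hmemA V).1 hVA
        obtain ⟨x, hx⟩ := (hfacts W' hW').1.1.1 V h'
        have : W' = W := block_eq_of_mem βP hW' hW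
          ((hfacts W' hW').1.1.2.1 V h' hx) (hVW hx)
        subst this
        exact h'
      · intro V hV
        refine Finset.mem_filter.2 ⟨(hmemA V).2 ⟨W, hW, hV⟩, ?_⟩
        exact fun x hx => (hfacts W hW).1.1.2.1 V hV hx
  rw [hcard, Finset.card_pi]
  refine Finset.prod_congr rfl ?_
  intro W hW
  rw [ht]
  exact spec_card W (βne W hW)
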